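/- Let K be a field of characteristic 0 and let n ≥ 2. Then GL_n(K) contains a non-cyclic free subgroup; explicitly, the matrices A = I + 2·E_{21} and B = I + 2·E_{12} (where I is the identity matrix and E_{ij} is the matrix unit with a single 1 in position (i,j)) generate a free subgroup of rank 2 of GL_n(K), i.e., the group homomorphism from the free group on two generators to GL_n(K) sending the two generators to A and B, respectively, is injective. -/

import Mathlib

open Matrix

namespace SanovAux

variable {n : ℕ}

lemma stdmul (i j : Fin n) (h : i ≠ j) (c d : ℚ) :
    (1 + single i j c) * (1 + single i j d) = 1 + single i j (c + d) := by
  rw [mul_add, add_mul, add_mul, one_mul, one_mul, mul_one,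
    Matrix.single_mul_single_of_ne (h := Ne.symm h), single_add, add_zero, add_assoc]

/-- elementary transvection as a unit -/
def elem (i j : Fin n) (h : i ≠ j) (c : ℚ) : GL (Fin n) ℚ :=
  ⟨1 + single i j c, 1 + single i j (-c),
   by rw [stdmul i j h, add_neg_cancel, single_zero, add_zero],
   by rw [stdmul i j h, neg_add_cancel, single_zero, add_zero]⟩

@[simp] lemma elem_val (i j : Fin n) (h : i ≠ j) (c : ℚ) :
    (elem i j h c).val = 1 + single i j c := rfl

@[simp] lemma elem_inv_val (i j : Fin n) (h : i ≠ j) (c : ℚ) :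
    ((elem i j h c)⁻¹).val = 1 + single i j (-c) := rfl

lemma elem_mulVec (i j : Fin n) (c : ℚ) (v : Fin n → ℚ) (k : Fin n) :
    ((1 + single i j c) *ᵥ v) k = v k + if i = k then c * v j else 0 := by
  simp [Matrix.mulVec, dotProduct, Matrix.add_apply, Matrix.one_apply, single,
    ite_and, add_mul, Finset.sum_add_distrib, Finset.sum_ite_eq, Finset.sum_ite_eq']

set_option maxHeartbeats 1000000 in
theorem sanov {n : ℕ} (i0 i1 : Fin n) (hne : i0 ≠ i1) :
    Function.Injective (FreeGroup.lift (fun t : Bool =>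
      if t then elem i1 i0 (Ne.symm hne) 2 else elem i0 i1 hne 2)) := by
  set Ag := elem i1 i0 (Ne.symm hne) 2 with hAg
  set Bg := elem i0 i1 hne 2 with hBg
  set H := Subgroup.closure ({Ag, Bg} : Set (GL (Fin n) ℚ)) with hH
  have hAmem : Ag ∈ H := Subgroup.subset_closure (by simp)
  have hBmem : Bg ∈ H := Subgroup.subset_closure (by simp)
  set a : Bool → H := fun t => if t then ⟨Ag, hAmem⟩ else ⟨Bg, hBmem⟩ with ha
  have hfac : (FreeGroup.lift fun t : Bool => if t then Ag else Bg)
      = H.subtype.comp (FreeGroup.lift a) := by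
    apply FreeGroup.ext_hom
    rintro (_ | _) <;> simp [ha]
  rw [hfac, MonoidHom.coe_comp]
  refine Function.Injective.comp (Subgroup.subtype_injective H) ?_
  -- preservation of the invariant set
  have key : ∀ g : GL (Fin n) ℚ, g ∈ H → ∀ v : Fin n → ℚ,
      (v i0 ≠ 0 ∨ v i1 ≠ 0) ↔ ((g.val *ᵥ v) i0 ≠ 0 ∨ (g.val *ᵥ v) i1 ≠ 0) := by
    intro g hg
    refine Subgroup.closure_induction ?_ ?_ ?_ ?_ hg
    · rintro x (rfl | rfl) v
      · simp only [hAg, elem_val, elem_mulVec, if_neg (Ne.symm hne), if_pos rfl, add_zero]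
        by_cases h0 : v i0 = 0 <;> simp [h0]
      · simp only [hBg, elem_val, elem_mulVec, if_neg hne, if_pos rfl, add_zero]
        by_cases h1 : v i1 = 0 <;> simp [h1]
    · intro v; simp
    · intro x y _ _ ihx ihy v
      rw [Units.val_mul, ← Matrix.mulVec_mulVec]
      exact (ihy v).trans (ihx (y.val *ᵥ v))
    · intro x _ ih v
      have h2 := ih ((x⁻¹).val *ᵥ v)
      rw [Matrix.mulVec_mulVec, Units.mul_inv, Matrix.one_mulVec] at h2
      exact h2.symm
  letI α := {v : Fin n → ℚ // v i0 ≠ 0 ∨ v i1 ≠ 0}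
  letI : MulAction H α :=
    { smul := fun g v => ⟨(g : GL (Fin n) ℚ).val *ᵥ v.1, (key _ g.2 v.1).mp v.2⟩
      one_smul := fun v => Subtype.ext <| by
        show ((1 : H) : GL (Fin n) ℚ).val *ᵥ v.1 = v.1
        simp
      mul_smul := fun g h v => Subtype.ext <| by
        show ((g * h : H) : GL (Fin n) ℚ).val *ᵥ v.1
          = (g : GL (Fin n) ℚ).val *ᵥ ((h : GL (Fin n) ℚ).val *ᵥ v.1)
        push_cast
        rw [Matrix.mulVec_mulVec] }
  have smul_coe : ∀ (g : H) (v : α), (g • v).1 = (g : GL (Fin n) ℚ).val *ᵥ v.1 :=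
    fun _ _ => rfl
  set X : Bool → Set α := fun t => if t then
      {v | (v.1 i0)^2 ≤ (v.1 i1)^2 ∧ 0 ≤ v.1 i0 * v.1 i1}
    else
      {v | (v.1 i1)^2 < (v.1 i0)^2 ∧ 0 ≤ v.1 i0 * v.1 i1} with hX
  set Y : Bool → Set α := fun t => if t then
      {v | (v.1 i0)^2 < (v.1 i1)^2 ∧ v.1 i0 * v.1 i1 < 0}
    else
      {v | (v.1 i1)^2 ≤ (v.1 i0)^2 ∧ v.1 i0 * v.1 i1 < 0} with hY
  refine FreeGroup.injective_lift_of_ping_pong a X Y ?_ ?_ ?_ ?_ ?_ ?_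
  · -- nonempty
    rintro (_ | _)
    · refine ⟨⟨Pi.single i0 1, Or.inl (by simp)⟩, ?_⟩
      simp [hX, Pi.single_eq_same, Pi.single_eq_of_ne, Ne.symm hne]
    · refine ⟨⟨Pi.single i1 1, Or.inr (by simp)⟩, ?_⟩
      simp [hX, Pi.single_eq_same, Pi.single_eq_of_ne, hne]
  · -- X pairwise disjoint
    intro b c hbc
    rw [Function.onFun, Set.disjoint_left]
    intro v hv1 hv2
    cases b <;> cases c <;> simp [hX] at hv1 hv2 hbc <;> linarith [hv1.1, hv1.2, hv2.1, hv2.2]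
  · -- Y pairwise disjoint
    intro b c hbc
    rw [Function.onFun, Set.disjoint_left]
    intro v hv1 hv2
    cases b <;> cases c <;> simp [hY] at hv1 hv2 hbc <;> linarith [hv1.1, hv1.2, hv2.1, hv2.2]
  · -- X and Y disjoint
    intro b c
    rw [Set.disjoint_left]
    intro v hv1 hv2
    cases b <;> cases c <;> simp [hX, hY] at hv1 hv2 <;> linarith [hv1.1, hv1.2, hv2.1, hv2.2]
  · -- ping
    rintro (_ | _) w hw <;> obtain ⟨v, hv, rfl⟩ := Set.mem_smul_set.mp hw
    · -- t = false : Bg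
      simp [hY] at hv
      have hcoord : (a false • v).1 = (1 + single i0 i1 (2 : ℚ)) *ᵥ v.1 := rfl
      simp [hX, hcoord, elem_mulVec, hne]
      have hy2 : 0 < (v.1 i0)^2 ∨ 0 < (v.1 i1)^2 := by
        rcases v.2 with h | h
        · exact Or.inl (by positivity)
        · exact Or.inr (by positivity)
      set x := v.1 i0; set y := v.1 i1
      rcases le_or_gt (y^2) (x^2) with h1 | h1
      · have h2 := hv h1
        constructor <;> rcases hy2 with h3 | h3 <;>
          nlinarith [sq_nonneg (x+y), sq_nonneg (x-y)]
      · constructor <;> nlinarith [sq_nonneg (x+y), sq_nonneg (x-y)]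
    · -- t = true : Ag
      simp [hY] at hv
      have hcoord : (a true • v).1 = (1 + single i1 i0 (2 : ℚ)) *ᵥ v.1 := rfl
      simp [hX, hcoord, elem_mulVec, Ne.symm hne]
      set x := v.1 i0; set y := v.1 i1
      rcases lt_or_ge (x^2) (y^2) with h1 | h1
      · have h2 := hv h1
        constructor <;> nlinarith [sq_nonneg (x+y), sq_nonneg (x-y)]
      · constructor <;> nlinarith [sq_nonneg (x+y), sq_nonneg (x-y)]
  · -- pong
    rintro (_ | _) w hw <;> obtain ⟨v, hv, rfl⟩ := Set.mem_smul_set.mp hw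
    · -- t = false : Bg⁻¹
      simp [hX] at hv
      have hcoord : ((a false)⁻¹ • v).1 = (1 + single i0 i1 (-2 : ℚ)) *ᵥ v.1 := rfl
      simp [hY, hcoord, elem_mulVec, hne]
      have hy2 : 0 < (v.1 i0)^2 ∨ 0 < (v.1 i1)^2 := by
        rcases v.2 with h | h
        · exact Or.inl (by positivity)
        · exact Or.inr (by positivity)
      set x := v.1 i0; set y := v.1 i1
      rcases lt_or_ge (y^2) (x^2) with h1 | h1
      · have h2 := hv h1
        constructor <;> rcases hy2 with h3 | h3 <;>
          nlinarith [sq_nonneg (x+y), sq_nonneg (x-y)]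
      · constructor <;> rcases hy2 with h3 | h3 <;>
          nlinarith [sq_nonneg (x+y), sq_nonneg (x-y)]
    · -- t = true : Ag⁻¹
      simp [hX] at hv
      have hcoord : ((a true)⁻¹ • v).1 = (1 + single i1 i0 (-2 : ℚ)) *ᵥ v.1 := rfl
      simp [hY, hcoord, elem_mulVec, Ne.symm hne]
      set x := v.1 i0; set y := v.1 i1
      rcases le_or_gt (x^2) (y^2) with h1 | h1
      · have h2 := hv h1
        constructor <;> nlinarith [sq_nonneg (x+y), sq_nonneg (x-y)]
      · constructor <;> nlinarith [sq_nonneg (x+y), sq_nonneg (x-y)]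

end SanovAux



/-- Let `K` be a field of characteristic `0` and `n ≥ 2`. Then `GLₙ(K)` contains a
non-cyclic free subgroup: the matrices `A = 1 + 2·E₂₁` and `B = 1 + 2·E₁₂` (where `Eᵢⱼ`
is the matrix unit with a single `1` in position `(i,j)`) generate a free subgroup of
rank 2, i.e. the group homomorphism from the free group on two generators (indexed by
`Bool`) sending the generators to `A` and `B` is injective. -/
theorem free_subgroup_GLn_charZero (K : Type) [Field K] [CharZero K]
    (n : ℕ) (hn : 2 ≤ n) :
    ∃ A B : GL (Fin n) K,
      (A : Matrix (Fin n) (Fin n) K) =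
        1 + Matrix.single (⟨1, by omega⟩ : Fin n) (⟨0, by omega⟩ : Fin n) (2 : K) ∧
      (B : Matrix (Fin n) (Fin n) K) =
        1 + Matrix.single (⟨0, by omega⟩ : Fin n) (⟨1, by omega⟩ : Fin n) (2 : K) ∧
      Function.Injective (FreeGroup.lift fun t : Bool => if t then A else B) := by
  have h0 : 0 < n := by omega
  have h1 : 1 < n := by omega
  set i0 : Fin n := ⟨0, by omega⟩ with hi0
  set i1 : Fin n := ⟨1, by omega⟩ with hi1
  have hne : i0 ≠ i1 := by simp [hi0, hi1, Fin.ext_iff]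
  set φ : Matrix (Fin n) (Fin n) ℚ →* Matrix (Fin n) (Fin n) K :=
    ((Rat.castHom K).mapMatrix).toMonoidHom with hφ
  have hφinj : Function.Injective φ := fun M N h =>
    Matrix.map_injective Rat.cast_injective (by simpa [hφ, RingHom.mapMatrix_apply] using h)
  have hstd : ∀ (i j : Fin n), φ (Matrix.single i j (2:ℚ))
      = Matrix.single i j (2:K) := by
    intro i j
    ext a b
    simp [hφ, RingHom.mapMatrix_apply, Matrix.map_apply, Matrix.single,
      apply_ite (fun q : ℚ => (q : K))]
  have hφval : ∀ (i j : Fin n) (h : i ≠ j),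
      ((Units.map φ (SanovAux.elem i j h 2) : GL (Fin n) K) : Matrix (Fin n) (Fin n) K)
        = 1 + Matrix.single i j (2:K) := by
    intro i j h
    rw [Units.coe_map]
    show (Rat.castHom K).mapMatrix (1 + Matrix.single i j (2:ℚ)) = _
    rw [map_add, _root_.map_one]
    exact congrArg (fun M => 1 + M) (hstd i j)
  refine ⟨Units.map φ (SanovAux.elem i1 i0 (Ne.symm hne) 2),
    Units.map φ (SanovAux.elem i0 i1 hne 2), hφval _ _ _, hφval _ _ _, ?_⟩
  have hcomp : (FreeGroup.lift fun t : Bool =>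
        if t then Units.map φ (SanovAux.elem i1 i0 (Ne.symm hne) 2)
        else Units.map φ (SanovAux.elem i0 i1 hne 2))
      = (Units.map φ).comp (FreeGroup.lift fun t : Bool =>
        if t then SanovAux.elem i1 i0 (Ne.symm hne) 2 else SanovAux.elem i0 i1 hne 2) :=
    FreeGroup.ext_hom _ _ (by rintro (_ | _) <;> simp)
  rw [hcomp, MonoidHom.coe_comp]
  exact (Units.map_injective hφinj).comp (SanovAux.sanov i0 i1 hne)
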